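/- Let M_1, …, M_k be matchings, each of size t, in an r-uniform hypergraph, with no rainbow matching of size t (i.e., no t pairwise disjoint hyperedges m_1,…,m_t with m_j ∈ M_{i_j} for distinct indices i_1,…,i_t). Then k ≤ F(r,t) for some finite bound F(r,t) depending only on r and t; in particular k ≤ t·(t·r choose r) · t! (any finite bound independent of the ground set suffices). -/
import Mathlib

open Finset

private def gBound (t : ℕ) : ℕ → ℕ
  | 0 => t
  | n+1 => t + 2 ^ ((n+1) * t) * gBound t n

private lemma gBound_ge (t n : ℕ) : t ≤ gBound t n := by
  cases n <;> simp [gBound]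

private lemma rainbow_key (t : ℕ) : ∀ (n : ℕ) (V I : Type) [Fintype I]
    (ρ : Fin t → ℕ) (A : I → Fin t → Finset V),
    (∑ c, ρ c) ≤ n →
    (∀ i c, (A i c).card ≤ ρ c) →
    (∀ i c c', c ≠ c' → Disjoint (A i c) (A i c')) →
    (¬ ∃ (ι : Fin t → I) (γ : Fin t → Fin t), Function.Injective ι ∧ Function.Injective γ ∧
        ∀ j j', j ≠ j' → Disjoint (A (ι j) (γ j)) (A (ι j') (γ j'))) →
    Fintype.card I ≤ gBound t n := by
  intro n
  induction n with
  | zero =>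
    intro V I _ ρ A hsum hcard hdisj hno
    by_contra hk
    push_neg at hk
    apply hno
    have hle : Fintype.card (Fin t) ≤ Fintype.card I := by
      simpa using le_of_lt (by simpa [gBound] using hk)
    obtain ⟨f⟩ := Function.Embedding.nonempty_of_card_le hle
    refine ⟨f, id, f.injective, Function.injective_id, ?_⟩
    intro j j' _
    have h0 : ∀ c, ρ c = 0 := by
      intro c
      have := Finset.single_le_sum (f := ρ) (fun i _ => Nat.zero_le _) (mem_univ c)
      omega
    have he : ∀ i c, A i c = ∅ := fun i c =>
      Finset.card_eq_zero.mp (le_antisymm (by simpa [h0 c] using hcard i c) (Nat.zero_le _))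
    simp [he]
  | succ n IH =>
    intro V I _ ρ A hsum hcard hdisj hno
    classical
    by_cases hkt : Fintype.card I ≤ t
    · exact le_trans hkt (gBound_ge t (n+1))
    push_neg at hkt
    -- valid partial rainbow selections
    set Valid : Finset (I × Fin t) → Prop := fun p =>
      ∀ q ∈ p, ∀ q' ∈ p, q ≠ q' →
        q.1 ≠ q'.1 ∧ q.2 ≠ q'.2 ∧ Disjoint (A q.1 q.2) (A q'.1 q'.2) with hValid
    have hS : ((Finset.univ : Finset (Finset (I × Fin t))).filter Valid).Nonempty :=
      ⟨∅, by simp [hValid]⟩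
    obtain ⟨p, hpS, hpmax⟩ := Finset.exists_max_image _ Finset.card hS
    have hpV : Valid p := (Finset.mem_filter.mp hpS).2
    -- a valid selection never has card t (else rainbow)
    have hbuild : ∀ q : Finset (I × Fin t), Valid q → q.card ≠ t := by
      intro q hqV hqc
      apply hno
      have e : Fin t ≃ ↥q := ((q.equivFin).trans (finCongr hqc)).symm
      refine ⟨fun j => (e j).1.1, fun j => (e j).1.2, ?_, ?_, ?_⟩
      · intro j j' h
        by_contra hne
        have hmem := (e j).2
        have hmem' := (e j').2
        have hee : (e j : I × Fin t) ≠ (e j' : I × Fin t) := by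
          intro hc
          exact hne (e.injective (Subtype.ext hc))
        exact (hqV _ hmem _ hmem' hee).1 h
      · intro j j' h
        by_contra hne
        have hee : (e j : I × Fin t) ≠ (e j' : I × Fin t) := by
          intro hc
          exact hne (e.injective (Subtype.ext hc))
        exact (hqV _ (e j).2 _ (e j').2 hee).2.1 h
      · intro j j' hne
        have hee : (e j : I × Fin t) ≠ (e j' : I × Fin t) := by
          intro hc
          exact hne (e.injective (Subtype.ext hc))
        exact (hqV _ (e j).2 _ (e j').2 hee).2.2
    -- snd is injective on p
    have hsndinj : ∀ x ∈ p, ∀ y ∈ p, x.2 = y.2 → x = y := by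
      intro x hx y hy hxy
      by_contra hne
      exact (hpV x hx y hy hne).2.1 hxy
    have hfstinj : ∀ x ∈ p, ∀ y ∈ p, x.1 = y.1 → x = y := by
      intro x hx y hy hxy
      by_contra hne
      exact (hpV x hx y hy hne).1 hxy
    have hpcard : p.card ≤ t := by
      have : (p.image Prod.snd).card = p.card := Finset.card_image_of_injOn
        (fun x hx y hy => hsndinj x hx y hy)
      calc p.card = (p.image Prod.snd).card := this.symm
        _ ≤ (Finset.univ : Finset (Fin t)).card := Finset.card_le_card (Finset.subset_univ _)
        _ = t := by simp
    have hplt : p.card < t := lt_of_le_of_ne hpcard (hbuild p hpV)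
    set U : Finset V := p.biUnion (fun q => A q.1 q.2) with hUdef
    have hUcard : U.card ≤ n + 1 := by
      calc U.card ≤ ∑ q ∈ p, (A q.1 q.2).card := Finset.card_biUnion_le
        _ ≤ ∑ q ∈ p, ρ q.2 := Finset.sum_le_sum (fun q _ => hcard q.1 q.2)
        _ = ∑ c ∈ p.image Prod.snd, ρ c := (Finset.sum_image (s := p) (g := Prod.snd) (f := ρ) hsndinj).symm
        _ ≤ ∑ c, ρ c := Finset.sum_le_sum_of_subset (Finset.subset_univ _)
        _ ≤ n + 1 := hsum
    -- maximality: unused rows/columns have nonempty trace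
    have hext : ∀ i, i ∉ p.image Prod.fst → ∀ c, c ∉ p.image Prod.snd →
        (A i c ∩ U).Nonempty := by
      intro i hi c hc
      by_contra hemp
      rw [Finset.not_nonempty_iff_eq_empty] at hemp
      have hdisjU : Disjoint (A i c) U := Finset.disjoint_iff_inter_eq_empty.mpr hemp
      have hnotmem : (i, c) ∉ p := fun h => hi (Finset.mem_image_of_mem _ h)
      have hp' : Valid (insert (i, c) p) := by
        intro q hq q' hq' hne
        rcases Finset.mem_insert.mp hq with hq | hq <;>
          rcases Finset.mem_insert.mp hq' with hq' | hq'
        · exact absurd (hq.trans hq'.symm) hne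
        · subst hq
          refine ⟨fun h => hi (Finset.mem_image.mpr ⟨q', hq', h.symm⟩),
            fun h => hc (Finset.mem_image.mpr ⟨q', hq', h.symm⟩), ?_⟩
          exact Finset.disjoint_of_subset_right
            (Finset.subset_biUnion_of_mem (fun q => A q.1 q.2) hq') hdisjU
        · subst hq'
          refine ⟨fun h => hi (Finset.mem_image.mpr ⟨q, hq, h⟩),
            fun h => hc (Finset.mem_image.mpr ⟨q, hq, h⟩), ?_⟩
          exact (Finset.disjoint_of_subset_right
            (Finset.subset_biUnion_of_mem (fun q => A q.1 q.2) hq) hdisjU).symm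
        · exact hpV q hq q' hq' hne
      have hmem : insert (i, c) p ∈ Finset.univ.filter Valid :=
        Finset.mem_filter.mpr ⟨Finset.mem_univ _, hp'⟩
      have := hpmax _ hmem
      rw [Finset.card_insert_of_notMem hnotmem] at this
      omega
    -- pick a free column and a free row
    have hc₀ : ∃ c₀ : Fin t, c₀ ∉ p.image Prod.snd := by
      by_contra h
      push_neg at h
      have : (Finset.univ : Finset (Fin t)) ⊆ p.image Prod.snd := fun c _ => h c
      have := Finset.card_le_card this
      simp only [Finset.card_univ, Fintype.card_fin] at this
      have := Finset.card_image_le (f := Prod.snd) (s := p)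
      omega
    obtain ⟨c₀, hc₀⟩ := hc₀
    have hi₀ : ∃ i₀ : I, i₀ ∉ p.image Prod.fst := by
      by_contra h
      push_neg at h
      have : (Finset.univ : Finset I) ⊆ p.image Prod.fst := fun i _ => h i
      have h1 := Finset.card_le_card this
      simp only [Finset.card_univ] at h1
      have := Finset.card_image_le (f := Prod.fst) (s := p)
      omega
    obtain ⟨i₀, hi₀⟩ := hi₀
    have hρc₀ : 1 ≤ ρ c₀ := by
      obtain ⟨v, hv⟩ := hext i₀ hi₀ c₀ hc₀
      have : (A i₀ c₀).Nonempty := ⟨v, (Finset.mem_inter.mp hv).1⟩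
      have := Finset.card_pos.mpr this
      have := hcard i₀ c₀
      omega
    -- reduced column bounds
    set ρ' : Fin t → ℕ := fun c => if c ∈ p.image Prod.snd then ρ c else ρ c - 1 with hρ'
    have hρ'sum : ∑ c, ρ' c ≤ n := by
      have hlt : ∑ c, ρ' c < ∑ c, ρ c := by
        refine Finset.sum_lt_sum (fun c _ => ?_) ⟨c₀, Finset.mem_univ _, ?_⟩
        · show (if c ∈ p.image Prod.snd then ρ c else ρ c - 1) ≤ ρ c
          split <;> omega
        · show (if c₀ ∈ p.image Prod.snd then ρ c₀ else ρ c₀ - 1) < ρ c₀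
          rw [if_neg hc₀]
          omega
      omega
    set R : Finset I := Finset.univ.filter (fun i => i ∉ p.image Prod.fst) with hR
    set tr : I → (Fin t → Finset V) := fun i c => A i c ∩ U with htr
    -- fiber bound via IH
    have hfiber : ∀ τ ∈ Fintype.piFinset (fun _ : Fin t => U.powerset),
        (R.filter (fun i => tr i = τ)).card ≤ gBound t n := by
      intro τ _
      set F : Finset I := R.filter (fun i => tr i = τ) with hF
      have : Fintype.card ↥F ≤ gBound t n := by
        apply IH V ↥F ρ' (fun i c => A i.1 c \ U) hρ'sum
        · intro i c
          by_cases h : c ∈ p.image Prod.snd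
          · simp only [hρ', if_pos h]
            exact le_trans (Finset.card_le_card (Finset.sdiff_subset)) (hcard i.1 c)
          · simp only [hρ', if_neg h]
            have hiR : i.1 ∈ R := (Finset.mem_filter.mp i.2).1
            have hine : (A i.1 c ∩ U).Nonempty :=
              hext i.1 (by simpa [hR] using (Finset.mem_filter.mp hiR).2) c h
            have h1 := Finset.card_inter_add_card_sdiff (A i.1 c) U
            have h2 := Finset.card_pos.mpr hine
            have h3 := hcard i.1 c
            omega
        · intro i c c' hcc
          exact (hdisj i.1 c c' hcc).mono Finset.sdiff_subset Finset.sdiff_subset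
        · rintro ⟨ι', γ', hι', hγ', hd⟩
          apply hno
          refine ⟨fun j => (ι' j).1, γ', fun j j' h => hι' (Subtype.ext h), hγ', ?_⟩
          intro j j' hne
          have htrj : ∀ j, tr (ι' j).1 = τ := fun j => (Finset.mem_filter.mp (ι' j).2).2
          have hAeq : ∀ (x : ↥F) (c : Fin t), A x.1 c = (A x.1 c ∩ U) ∪ (A x.1 c \ U) := by
            intro x c
            ext v
            simp only [Finset.mem_union, Finset.mem_inter, Finset.mem_sdiff]
            tauto
          rw [hAeq (ι' j) (γ' j), hAeq (ι' j') (γ' j')]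
          have hγne : γ' j ≠ γ' j' := fun h => hne (hγ' h)
          have hXuYu : Disjoint (A (ι' j).1 (γ' j) ∩ U) (A (ι' j').1 (γ' j') ∩ U) := by
            have h1 : A (ι' j).1 (γ' j) ∩ U = τ (γ' j) := congrFun (htrj j) (γ' j)
            have h2 : A (ι' j').1 (γ' j') ∩ U = τ (γ' j') := congrFun (htrj j') (γ' j')
            have h3 : A (ι' j).1 (γ' j') ∩ U = τ (γ' j') := congrFun (htrj j) (γ' j')
            rw [h1, h2]
            have hd2 : Disjoint (A (ι' j).1 (γ' j) ∩ U) (A (ι' j).1 (γ' j') ∩ U) :=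
              (hdisj (ι' j).1 (γ' j) (γ' j') hγne).mono
                Finset.inter_subset_left Finset.inter_subset_left
            rwa [h1, h3] at hd2
          have hXuYb : Disjoint (A (ι' j).1 (γ' j) ∩ U) (A (ι' j').1 (γ' j') \ U) :=
            (Finset.sdiff_disjoint (s := U) (t := A (ι' j').1 (γ' j'))).symm.mono_left
              Finset.inter_subset_right
          have hXbYu : Disjoint (A (ι' j).1 (γ' j) \ U) (A (ι' j').1 (γ' j') ∩ U) :=
            (Finset.sdiff_disjoint (s := U) (t := A (ι' j).1 (γ' j))).mono_right
              Finset.inter_subset_right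
          have hXbYb := hd j j' hne
          rw [Finset.disjoint_union_left, Finset.disjoint_union_right,
            Finset.disjoint_union_right]
          exact ⟨⟨hXuYu, hXuYb⟩, ⟨hXbYu, hXbYb⟩⟩
      simpa [Fintype.card_coe] using this
    -- pigeonhole count
    have hRcard : R.card ≤ gBound t n *
        (Fintype.piFinset (fun _ : Fin t => U.powerset)).card := by
      apply Finset.card_le_mul_card_image_of_maps_to (f := tr)
      · intro i _
        rw [Fintype.mem_piFinset]
        intro c
        exact Finset.mem_powerset.mpr Finset.inter_subset_right
      · exact hfiber
    have hpow : (Fintype.piFinset (fun _ : Fin t => U.powerset)).card ≤ 2 ^ ((n+1) * t) := by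
      rw [Fintype.card_piFinset]
      calc ∏ _c : Fin t, U.powerset.card = (2 ^ U.card) ^ t := by
            simp [Finset.card_powerset]
        _ ≤ (2 ^ (n+1)) ^ t := Nat.pow_le_pow_left (Nat.pow_le_pow_right (by norm_num) hUcard) t
        _ = 2 ^ ((n+1) * t) := by rw [← pow_mul]
    have hcount : Fintype.card I ≤ (p.image Prod.fst).card + R.card := by
      have hsub : (Finset.univ : Finset I) ⊆ p.image Prod.fst ∪ R := by
        intro i _
        by_cases h : i ∈ p.image Prod.fst
        · exact Finset.mem_union_left _ h
        · refine Finset.mem_union_right _ ?_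
          rw [hR, Finset.mem_filter]
          exact ⟨Finset.mem_univ _, h⟩
      calc Fintype.card I = (Finset.univ : Finset I).card := Finset.card_univ.symm
        _ ≤ (p.image Prod.fst ∪ R).card := Finset.card_le_card hsub
        _ ≤ (p.image Prod.fst).card + R.card := Finset.card_union_le _ _
    have himgf : (p.image Prod.fst).card ≤ t := le_trans Finset.card_image_le (le_of_lt hplt)
    have : R.card ≤ 2 ^ ((n+1) * t) * gBound t n := by
      calc R.card ≤ gBound t n * (Fintype.piFinset (fun _ : Fin t => U.powerset)).card := hRcard
        _ ≤ gBound t n * 2 ^ ((n+1) * t) := Nat.mul_le_mul_left _ hpow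
        _ = 2 ^ ((n+1) * t) * gBound t n := Nat.mul_comm _ _
    calc Fintype.card I ≤ (p.image Prod.fst).card + R.card := hcount
      _ ≤ t + 2 ^ ((n+1) * t) * gBound t n := Nat.add_le_add himgf this
      _ = gBound t (n+1) := rfl

/-- For all r, t there is a finite bound F(r,t), independent of the ground
set, such that whenever M_1, …, M_k are matchings of size t in an r-uniform hypergraph with
no rainbow matching of size t (no t pairwise disjoint hyperedges taken from t distinct
matchings), then k ≤ F(r,t). -/
theorem rainbow_matching_bound (r t : ℕ) :
    ∃ F : ℕ, ∀ (V : Type) (k : ℕ) (M : Fin k → Finset (Finset V)),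
      (∀ i : Fin k, (∀ e ∈ M i, e.card = r) ∧ (M i).card = t ∧
        ∀ e ∈ M i, ∀ e' ∈ M i, e ≠ e' → Disjoint e e') →
      (¬ ∃ (ι : Fin t → Fin k) (m : Fin t → Finset V), Function.Injective ι ∧
        (∀ j, m j ∈ M (ι j)) ∧ ∀ j j' : Fin t, j ≠ j' → Disjoint (m j) (m j')) →
      k ≤ F := by
  classical
  refine ⟨gBound t (t * r), ?_⟩
  intro V k M hM hno
  have hcard : ∀ i, (M i).card = t := fun i => (hM i).2.1
  have e : ∀ i, Fin t ≃ ↥(M i) := fun i => ((M i).equivFin.trans (finCongr (hcard i))).symm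
  set A : Fin k → Fin t → Finset V := fun i c => ((e i) c : Finset V) with hA
  have hmemA : ∀ i c, A i c ∈ M i := fun i c => ((e i) c).2
  have key := rainbow_key t (t * r) V (Fin k) (fun _ => r) A ?_ ?_ ?_ ?_
  · simpa using key
  · simp [Finset.sum_const, Finset.card_univ, mul_comm]
  · intro i c
    exact le_of_eq ((hM i).1 _ (hmemA i c))
  · intro i c c' hne
    have hneq : A i c ≠ A i c' := fun h => hne ((e i).symm.symm.injective (Subtype.ext h))
    exact (hM i).2.2 _ (hmemA i c) _ (hmemA i c') hneq
  · rintro ⟨ι, γ, hι, hγ, hd⟩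
    exact hno ⟨ι, fun j => A (ι j) (γ j), hι, fun j => hmemA (ι j) (γ j), hd⟩
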